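/- Let (M,g) be a lightlike hypersurface, tangent to the structure vector field ζ, of an indefinite Sasakian manifold (M̄, φ̄, ζ, η, ḡ), whose second fundamental form h is recurrent with recurrence 1-form α. Then for all X, Y tangent to M: (i) A*_ξ(A*_ξ X) = 0; (ii) α(X) = −B(U, φX); (iii) B(X, φY) + B(Y, φX) − B(U, φX)u(Y) = 0; (iv) A*_ξ V = 0; (v) A*_ξ(φ(A*_ξ X)) = 0. -/

import Mathlib

/-- An algebraic model, at the level of (local) smooth functions and vector fields, of a
lightlike hypersurface `(M,g)`, tangent to the structure vector field `ζ`, of an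
indefinite Sasakian manifold `(M̄, φ̄, ζ, η, ḡ)`, together with a chosen screen
distribution `S(TM)` (containing `ζ`, `φ̄ ξ` and `φ̄ N`), a (local) section `ξ` of the
rank-one normal bundle `TM⊥ ⊆ TM`, the associated null transversal section `N`, and all
the induced objects of the Gauss–Weingarten equations.

* `F` models the commutative `ℝ`-algebra of smooth functions on (an open subset of) `M`;
* `E` models the `F`-module of sections of the ambient tangent bundle `TM̄` restricted to `M`;
* `η(X)` is encoded throughout as `ḡ(X,ζ)`, `u(X)` as `g(X,V)`, `v(X)` as `g(X,U)` and
  `θ(X)` as `ḡ(X,N)`. -/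
structure SasakiLightlikeHypersurface (F : Type) [CommRing F] [Algebra ℝ F]
    (E : Type) [AddCommGroup E] [Module F E] where
  /-- the submodule of vector fields tangent to the hypersurface `M` -/
  TM : Submodule F E
  /-- the ambient metric `ḡ` (whose restriction to `TM` is the degenerate induced metric `g`) -/
  gbar : E →ₗ[F] E →ₗ[F] F
  gbar_symm : ∀ X Y : E, gbar X Y = gbar Y X
  /-- the directional derivative `X ⬝ f` of functions along tangent vector fields -/
  D : TM → Derivation ℝ F F
  D_add : ∀ X Y : TM, D (X + Y) = D X + D Y
  D_smul : ∀ (f : F) (X : TM) (k : F), D (f • X) k = f * D X k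
  /-- the Lie bracket of vector fields tangent to `M` -/
  bracket : TM → TM → TM
  D_bracket : ∀ (X Y : TM) (f : F), D (bracket X Y) f = D X (D Y f) - D Y (D X f)
  /-- the ambient Levi-Civita connection `∇̄`, in directions tangent to `M` -/
  nablaBar : TM → E → E
  nablaBar_add : ∀ (X Y : TM) (Z : E), nablaBar (X + Y) Z = nablaBar X Z + nablaBar Y Z
  nablaBar_smul : ∀ (f : F) (X : TM) (Z : E), nablaBar (f • X) Z = f • nablaBar X Z
  nablaBar_add' : ∀ (X : TM) (Y Z : E), nablaBar X (Y + Z) = nablaBar X Y + nablaBar X Z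
  nablaBar_leibniz : ∀ (X : TM) (f : F) (Y : E),
    nablaBar X (f • Y) = D X f • Y + f • nablaBar X Y
  nablaBar_metric : ∀ (X : TM) (Y Z : E),
    D X (gbar Y Z) = gbar (nablaBar X Y) Z + gbar Y (nablaBar X Z)
  nablaBar_torsion_free : ∀ X Y : TM,
    nablaBar X (Y : E) - nablaBar Y (X : E) = (bracket X Y : E)
  /-- a (local) section `ξ` of the rank-one lightlike normal bundle `TM⊥ ⊆ TM` -/
  xi : TM
  xi_normal : ∀ Y : TM, gbar (xi : E) (Y : E) = 0
  xi_spans : ∀ X : TM, (∀ Y : TM, gbar (X : E) (Y : E) = 0) →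
    ∃ f : F, (X : E) = f • (xi : E)
  /-- the screen distribution `S(TM)`, a nondegenerate complement of `TM⊥` in `TM` -/
  S : Submodule F E
  S_le : S ≤ TM
  S_compl : ∀ X : TM, ∃ W ∈ S, ∃ f : F, (X : E) = W + f • (xi : E)
  S_nondeg : ∀ W ∈ S, (∀ Z ∈ S, gbar W Z = 0) → W = 0
  /-- the null transversal section `N`, with `ḡ(ξ,N) = 1`, `ḡ(N,N) = 0`, `ḡ(N, S(TM)) = 0` -/
  Nt : E
  gbar_xi_Nt : gbar (xi : E) Nt = 1
  gbar_Nt_Nt : gbar Nt Nt = 0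
  gbar_Nt_S : ∀ Z ∈ S, gbar Nt Z = 0
  /-- the induced connection `∇` on `M` -/
  nabla : TM → TM → TM
  /-- the local second fundamental form `B` of `M` (the second fundamental form being
  `h(X,Y) = B(X,Y) N`) -/
  B : TM → TM → F
  /-- Gauss equation: `∇̄_X Y = ∇_X Y + B(X,Y) N` -/
  gauss : ∀ X Y : TM, nablaBar X (Y : E) = (nabla X Y : E) + B X Y • Nt
  /-- the shape operator `A_N` of `M` -/
  AN : TM → TM
  /-- the transversal `1`-form `τ`, so that the transversal connection is `∇ᵗ_X N = τ(X) N` -/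
  tau : TM → F
  /-- Weingarten equation: `∇̄_X N = −A_N X + τ(X) N` -/
  weingarten : ∀ X : TM, nablaBar X Nt = -(AN X : E) + tau X • Nt
  /-- the screen shape operator `A*_ξ` -/
  Astar : TM → TM
  /-- `∇_X ξ = −A*_ξ X − τ(X) ξ` -/
  weingarten_screen : ∀ X : TM, nablaBar X (xi : E) = -(Astar X : E) - tau X • (xi : E)
  /-- the projection `P` of `TM` onto `S(TM)`: `X = PX + θ(X) ξ`, `θ(X) = ḡ(X,N)` -/
  P : TM → TM
  P_mem : ∀ X : TM, (P X : E) ∈ S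
  P_spec : ∀ X : TM, (X : E) = (P X : E) + gbar (X : E) Nt • (xi : E)
  /-- the induced connection `∇*` on the screen distribution -/
  nablaStar : TM → TM → TM
  /-- the local second fundamental form `C` of the screen distribution -/
  C : TM → TM → F
  nablaStar_mem : ∀ (X Y : TM), (Y : E) ∈ S → (nablaStar X Y : E) ∈ S
  /-- screen Gauss equation: `∇_X PY = ∇*_X PY + C(X,PY) ξ` -/
  screen_gauss : ∀ (X Y : TM), (Y : E) ∈ S → nabla X Y = nablaStar X Y + C X Y • xi
  /-- the ambient almost contact structure tensor `φ̄` -/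
  phibar : E →ₗ[F] E
  /-- the structure vector field `ζ`, tangent to `M` and lying in the screen distribution -/
  zeta : TM
  zeta_mem : (zeta : E) ∈ S
  gbar_zeta_zeta : gbar (zeta : E) (zeta : E) = 1
  /-- `φ̄² X = −X + η(X) ζ`, where `η(X) = ḡ(X,ζ)` -/
  phibar_sq : ∀ X : E, phibar (phibar X) = -X + gbar X (zeta : E) • (zeta : E)
  /-- `ḡ(φ̄X, φ̄Y) = ḡ(X,Y) − η(X) η(Y)` -/
  phibar_metric : ∀ X Y : E,
    gbar (phibar X) (phibar Y) = gbar X Y - gbar X (zeta : E) * gbar Y (zeta : E)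
  /-- Sasakian condition: `(∇̄_X φ̄) Y = ḡ(X,Y) ζ − η(Y) X` -/
  sasaki : ∀ (X : TM) (Y : E), nablaBar X (phibar Y) - phibar (nablaBar X Y)
    = gbar (X : E) Y • (zeta : E) - gbar Y (zeta : E) • (X : E)
  /-- `∇̄_X ζ = −φ̄ X` -/
  sasaki_zeta : ∀ X : TM, nablaBar X (zeta : E) = -(phibar (X : E))
  /-- `U = −φ̄ N`, tangent to `M` and lying in the screen distribution -/
  U : TM
  U_mem : (U : E) ∈ S
  U_spec : (U : E) = -(phibar Nt)
  /-- `V = −φ̄ ξ`, tangent to `M` and lying in the screen distribution -/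
  V : TM
  V_mem : (V : E) ∈ S
  V_spec : (V : E) = -(phibar (xi : E))
  /-- the induced structure tensor `φ` on `M` -/
  phi : TM → TM
  /-- `φ̄ X = φ X + u(X) N`, where `u(X) = g(X,V)` -/
  phi_spec : ∀ X : TM, phibar (X : E) = (phi X : E) + gbar (X : E) (V : E) • Nt

/-- Let `(M,g)` be a lightlike hypersurface, tangent to the structure vector field `ζ`, of
an indefinite Sasakian manifold `(M̄, φ̄, ζ, η, ḡ)`, whose second fundamental form
`h = B ⊗ N` is recurrent with recurrence `1`-form `α`. Then for all `X, Y` tangent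
to `M`: (i) `A*_ξ (A*_ξ X) = 0`; (ii) `α(X) = −B(U, φX)`;
(iii) `B(X, φY) + B(Y, φX) − B(U, φX) u(Y) = 0`, where `u(Y) = g(Y,V)`;
(iv) `A*_ξ V = 0`; (v) `A*_ξ (φ (A*_ξ X)) = 0`. -/
theorem recurrent_h_consequences
    (F : Type) [CommRing F] [Algebra ℝ F]
    (E : Type) [AddCommGroup E] [Module F E]
    (H : SasakiLightlikeHypersurface F E)
    (α : H.TM →ₗ[F] F)
    (hrec : ∀ X Y Z : H.TM,
      (H.D X (H.B Y Z) + H.B Y Z * H.tau X) • H.Nt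
        - H.B (H.nabla X Y) Z • H.Nt - H.B Y (H.nabla X Z) • H.Nt
        = (α X * H.B Y Z) • H.Nt) :
    (∀ X : H.TM, H.Astar (H.Astar X) = 0)
    ∧ (∀ X : H.TM, α X = -(H.B H.U (H.phi X)))
    ∧ (∀ X Y : H.TM,
        H.B X (H.phi Y) + H.B Y (H.phi X)
          - H.B H.U (H.phi X) * H.gbar (Y : E) (H.V : E) = 0)
    ∧ H.Astar H.V = 0
    ∧ (∀ X : H.TM, H.Astar (H.phi (H.Astar X)) = 0) := by

  -- notation-level preliminaries
  have hXn : ∀ Y : H.TM, H.gbar (Y : E) (H.xi : E) = 0 := fun Y => by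
    rw [H.gbar_symm]; exact H.xi_normal Y
  have hNξ : H.gbar H.Nt (H.xi : E) = 1 := by rw [H.gbar_symm]; exact H.gbar_xi_Nt
  have hNζ : H.gbar H.Nt (H.zeta : E) = 0 := H.gbar_Nt_S _ H.zeta_mem
  -- the scalar form of the recurrence hypothesis
  have hR : ∀ X Y Z : H.TM, H.D X (H.B Y Z) + H.B Y Z * H.tau X
      - H.B (H.nabla X Y) Z - H.B Y (H.nabla X Z) = α X * H.B Y Z := by
    intro X Y Z
    have h := congrArg (fun e => H.gbar (H.xi : E) e) (hrec X Y Z)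
    simp only [map_sub, map_smul, H.gbar_xi_Nt, smul_eq_mul, mul_one] at h
    linear_combination h
  -- B X Y = ḡ(A*X, Y)
  have hBg : ∀ X Y : H.TM, H.B X Y = H.gbar ((H.Astar X : E)) (Y : E) := by
    intro X Y
    have h := H.nablaBar_metric X (Y : E) (H.xi : E)
    rw [hXn Y, H.gauss X Y, H.weingarten_screen X] at h
    simp only [map_zero, map_add, map_sub, map_neg, map_smul, LinearMap.add_apply,
      LinearMap.sub_apply, LinearMap.neg_apply, LinearMap.smul_apply, smul_eq_mul,
      hXn, hNξ, mul_one, mul_zero, zero_add, add_zero, neg_zero] at h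
    have hs : H.gbar (Y : E) ((H.Astar X : E)) = H.gbar ((H.Astar X : E)) (Y : E) :=
      H.gbar_symm _ _
    linear_combination -h + hs
  -- B is symmetric
  have hBsymm : ∀ X Y : H.TM, H.B X Y = H.B Y X := by
    intro X Y
    have h := congrArg (fun e => H.gbar e (H.xi : E)) (H.nablaBar_torsion_free X Y)
    rw [H.gauss X Y, H.gauss Y X] at h
    simp only [map_add, map_sub, map_smul, LinearMap.add_apply, LinearMap.sub_apply,
      LinearMap.smul_apply, smul_eq_mul, hXn, hNξ, mul_one, zero_add, add_zero] at h
    linear_combination h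
  have hBxi : ∀ X : H.TM, H.B X H.xi = 0 := fun X => (hBg X H.xi).trans (hXn _)
  have hBxi' : ∀ X : H.TM, H.B H.xi X = 0 := fun X => (hBsymm _ _).trans (hBxi X)
  -- ḡ(A*X, N) = 0
  have hANt : ∀ X : H.TM, H.gbar ((H.Astar X : E)) H.Nt = 0 := by
    intro X
    have h := H.nablaBar_metric X (H.xi : E) H.Nt
    rw [H.gbar_xi_Nt, H.weingarten_screen X, H.weingarten X] at h
    simp only [Derivation.map_one_eq_zero, map_add, map_sub, map_neg, map_smul,
      LinearMap.add_apply, LinearMap.sub_apply, LinearMap.neg_apply, LinearMap.smul_apply,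
      smul_eq_mul, hXn, H.xi_normal, H.gbar_Nt_Nt, H.gbar_xi_Nt, mul_one, mul_zero,
      zero_add, add_zero, neg_zero] at h
    linear_combination h
  have hNtA : ∀ X : H.TM, H.gbar H.Nt ((H.Astar X : E)) = 0 := fun X =>
    (H.gbar_symm _ _).trans (hANt X)
  -- vanishing criterion
  have hzero : ∀ X : H.TM, (∀ Y : H.TM, H.gbar (X : E) (Y : E) = 0) →
      H.gbar (X : E) H.Nt = 0 → X = 0 := by
    intro X h1 h2
    obtain ⟨f, hf⟩ := H.xi_spans X h1
    rw [hf] at h2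
    simp only [map_smul, LinearMap.smul_apply, smul_eq_mul, H.gbar_xi_Nt, mul_one] at h2
    have : (X : E) = 0 := by rw [hf, h2, zero_smul]
    exact Subtype.ext (by simpa using this)
  have hAzero : ∀ X : H.TM, (∀ Y : H.TM, H.B X Y = 0) → H.Astar X = 0 := by
    intro X h
    refine hzero _ (fun Y => ?_) (hANt X)
    rw [← hBg]; exact h Y
  -- ∇_X ξ = −A*X − τ(X) ξ
  have hnablaxi : ∀ X : H.TM, ((H.nabla X H.xi : E))
      = -((H.Astar X : E)) - H.tau X • (H.xi : E) := by
    intro X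
    have h := H.gauss X H.xi
    rw [H.weingarten_screen X, hBxi X, zero_smul, add_zero] at h
    exact h.symm
  -- B(Y, A*X) = 0
  have hBA : ∀ X Y : H.TM, H.B Y (H.Astar X) = 0 := by
    intro X Y
    have h := hR X Y H.xi
    rw [hBxi Y, hBxi (H.nabla X Y)] at h
    simp only [map_zero, zero_mul, mul_zero, sub_zero, zero_sub, add_zero, zero_add,
      neg_eq_zero] at h
    rw [hBg Y (H.nabla X H.xi), hnablaxi X] at h
    simp only [map_sub, map_neg, map_smul, smul_eq_mul, hXn, mul_zero, sub_zero,
      neg_eq_zero] at h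
    rw [hBg]; exact h
  -- item (i)
  have hi : ∀ X : H.TM, H.Astar (H.Astar X) = 0 := by
    intro X
    refine hAzero _ (fun Y => ?_)
    rw [hBsymm]; exact hBA X Y
  -- basic Sasakian consequences
  have hφNt : H.phibar H.Nt = -(H.U : E) := by rw [H.U_spec, neg_neg]
  have hφξ : H.phibar (H.xi : E) = -(H.V : E) := by rw [H.V_spec, neg_neg]
  have hu : ∀ Y : H.TM, H.gbar (H.phibar (Y : E)) (H.xi : E) = H.gbar (Y : E) (H.V : E) := by
    intro Y
    rw [H.phi_spec Y]
    simp only [map_add, map_smul, LinearMap.add_apply, LinearMap.smul_apply, smul_eq_mul,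
      hXn, hNξ, mul_one, zero_add]
  have hφU : H.phibar (H.U : E) = H.Nt := by
    rw [H.U_spec, map_neg, H.phibar_sq, hNζ, zero_smul, add_zero, neg_neg]
  have hφV : H.phibar (H.V : E) = (H.xi : E) := by
    rw [H.V_spec, map_neg, H.phibar_sq, H.xi_normal H.zeta, zero_smul, add_zero, neg_neg]
  have huU : H.gbar (H.U : E) (H.V : E) = 1 := by rw [← hu H.U, hφU]; exact hNξ
  have huξ : H.gbar (H.xi : E) (H.V : E) = 0 := by
    rw [← hu H.xi, hφξ]
    simp only [map_neg, LinearMap.neg_apply, hXn, neg_zero]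
  have huV : H.gbar (H.V : E) (H.V : E) = 0 := by
    rw [← hu H.V, hφV]; exact hXn H.xi
  have hφU0 : ((H.phi H.U : E)) = 0 := by
    have h := H.phi_spec H.U
    rw [hφU, huU, one_smul] at h
    exact right_eq_add.mp h
  have hφVE : ((H.phi H.V : E)) = (H.xi : E) := by
    have h := H.phi_spec H.V
    rw [hφV, huV, zero_smul, add_zero] at h
    exact h.symm
  have hφξE : ((H.phi H.xi : E)) = -(H.V : E) := by
    have h := H.phi_spec H.xi
    rw [hφξ, huξ, zero_smul, add_zero] at h
    exact h.symm
  -- B(X,ζ) = −u(X), ∇_X ζ = −φX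
  have hBζ : ∀ X : H.TM, H.B X H.zeta = -(H.gbar (X : E) (H.V : E)) := by
    intro X
    have h := H.gauss X H.zeta
    rw [H.sasaki_zeta X, H.phi_spec X] at h
    have h2 := congrArg (fun e => H.gbar e (H.xi : E)) h
    simp only [map_neg, map_add, map_smul, LinearMap.neg_apply, LinearMap.add_apply,
      LinearMap.smul_apply, smul_eq_mul, hXn, hNξ, mul_one, zero_add] at h2
    linear_combination -h2
  have hnablaζ : ∀ X : H.TM, ((H.nabla X H.zeta : E)) = -((H.phi X : E)) := by
    intro X
    have h := H.gauss X H.zeta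
    rw [H.sasaki_zeta X, H.phi_spec X, hBζ X, neg_smul, neg_add] at h
    exact (add_right_cancel h).symm
  -- φ² formula and u ∘ φ = 0
  have hsq : ∀ Y : H.TM, ((H.phi (H.phi Y) : E)) + H.gbar ((H.phi Y : E)) (H.V : E) • H.Nt
      + H.gbar (Y : E) (H.V : E) • (-(H.U : E))
      = -(Y : E) + H.gbar (Y : E) (H.zeta : E) • (H.zeta : E) := by
    intro Y
    have h := H.phibar_sq (Y : E)
    rw [H.phi_spec Y, map_add, map_smul, H.phi_spec (H.phi Y), hφNt] at h
    exact h
  have huφ : ∀ Y : H.TM, H.gbar ((H.phi Y : E)) (H.V : E) = 0 := by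
    intro Y
    have h := congrArg (fun e => H.gbar e (H.xi : E)) (hsq Y)
    simp only [map_add, map_neg, map_smul, LinearMap.add_apply, LinearMap.neg_apply,
      LinearMap.smul_apply, smul_eq_mul, hXn, hNξ, mul_one, mul_zero, zero_add, add_zero,
      neg_zero, zero_mul] at h
    linear_combination h
  have hphisq : ∀ Y : H.TM, ((H.phi (H.phi Y) : E))
      = (-(Y : E) + H.gbar (Y : E) (H.zeta : E) • (H.zeta : E))
        + H.gbar (Y : E) (H.V : E) • (H.U : E) := by
    intro Y
    have h := hsq Y
    rw [huφ Y, zero_smul, add_zero, smul_neg, ← sub_eq_add_neg, sub_eq_iff_eq_add] at h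
    exact h
  -- the derivative of u
  have hDu : ∀ X Y : H.TM, H.D X (H.gbar (Y : E) (H.V : E))
      = H.gbar ((H.nabla X Y : E)) (H.V : E) - H.B X (H.phi Y)
        - H.tau X * H.gbar (Y : E) (H.V : E) := by
    intro X Y
    have h1 := H.nablaBar_metric X (H.phibar (Y : E)) (H.xi : E)
    rw [hu Y] at h1
    have h2 := H.sasaki X (Y : E)
    rw [H.gauss X Y, map_add, map_smul, sub_eq_iff_eq_add] at h2
    rw [h2, H.weingarten_screen, H.phi_spec Y, hφNt] at h1
    simp only [map_add, map_sub, map_neg, map_smul, LinearMap.add_apply, LinearMap.sub_apply,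
      LinearMap.neg_apply, LinearMap.smul_apply, smul_eq_mul, hXn, hNξ, hNtA,
      hu (H.nabla X Y), mul_one, mul_zero, zero_add, add_zero, neg_zero, zero_mul, sub_zero] at h1
    have hAφ : H.gbar ((H.phi Y : E)) ((H.Astar X : E)) = H.B X (H.phi Y) :=
      (H.gbar_symm _ _).trans (hBg X (H.phi Y)).symm
    rw [hAφ] at h1
    linear_combination h1
  -- the key consequence of recurrence
  have key2 : ∀ X Y : H.TM, H.B X (H.phi Y) + H.B Y (H.phi X)
      + α X * H.gbar (Y : E) (H.V : E) = 0 := by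
    intro X Y
    have h := hR X Y H.zeta
    rw [hBζ Y, hBζ (H.nabla X Y)] at h
    have h2 : H.B Y (H.nabla X H.zeta) = -(H.B Y (H.phi X)) := by
      rw [hBg, hBg, hnablaζ X, map_neg]
    rw [h2, map_neg] at h
    have h3 := hDu X Y
    linear_combination h + h3
  -- item (ii)
  have hα : ∀ X : H.TM, α X = -(H.B H.U (H.phi X)) := by
    intro X
    have h := key2 X H.U
    have h1 : H.B X (H.phi H.U) = 0 := by rw [hBg, hφU0]; exact map_zero _
    rw [h1, huU, mul_one, zero_add] at h
    linear_combination h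
  -- item (iii)
  have hiii : ∀ X Y : H.TM, H.B X (H.phi Y) + H.B Y (H.phi X)
      - H.B H.U (H.phi X) * H.gbar (Y : E) (H.V : E) = 0 := by
    intro X Y
    have h := key2 X Y
    rw [hα X] at h
    linear_combination h
  -- item (iv)
  have hBφξ : ∀ X : H.TM, H.B X (H.phi H.xi) = 0 := by
    intro X
    have h := key2 X H.xi
    rw [hBxi' (H.phi X), huξ, mul_zero, add_zero, add_zero] at h
    exact h
  have hαV : α H.V = 0 := by
    rw [hα H.V, hBg, hφVE, hXn, neg_zero]
  have hBVφ : ∀ Y : H.TM, H.B H.V (H.phi Y) = 0 := by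
    intro Y
    have h := key2 H.V Y
    have h1 : H.B Y (H.phi H.V) = 0 := by rw [hBg, hφVE]; exact hXn _
    rw [h1, hαV, zero_mul, add_zero, add_zero] at h
    exact h
  have hBVU : H.B H.V H.U = 0 := by
    rw [hBsymm]
    have h := hBφξ H.U
    rw [hBg, hφξE] at h
    simp only [map_neg, neg_eq_zero] at h
    rw [hBg]; exact h
  have hBV : ∀ Y : H.TM, H.B H.V Y = 0 := by
    intro Y
    have h0 : H.B H.V (H.phi (H.phi Y)) = 0 := hBVφ (H.phi Y)
    rw [hBg, hphisq Y] at h0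
    have t2 : H.gbar ((H.Astar H.V : E)) (H.zeta : E) = 0 := by
      rw [← hBg, hBζ H.V, huV, neg_zero]
    have t3 : H.gbar ((H.Astar H.V : E)) (H.U : E) = 0 := by rw [← hBg]; exact hBVU
    simp only [map_add, map_neg, map_smul, smul_eq_mul, t2, t3, mul_zero, add_zero,
      neg_eq_zero] at h0
    rw [hBg]; exact h0
  have hiv : H.Astar H.V = 0 := hAzero H.V hBV
  -- item (v)
  have hv : ∀ X : H.TM, H.Astar (H.phi (H.Astar X)) = 0 := by
    intro X
    refine hAzero _ (fun W => ?_)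
    rw [hBsymm]
    have h := key2 W (H.Astar X)
    have h1 : H.B (H.Astar X) (H.phi W) = 0 := (hBsymm _ _).trans (hBA X (H.phi W))
    have h2 : H.gbar ((H.Astar X : E)) (H.V : E) = 0 :=
      (hBg X H.V).symm.trans ((hBsymm X H.V).trans (hBV X))
    rw [h1, h2, mul_zero, add_zero, add_zero] at h
    exact h
  exact ⟨hi, hα, hiii, hiv, hv⟩
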